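/- Concavity of the (d+1)-point concavification: let X ⊆ ℝ^d be nonempty and let r : X → ℝ be bounded above. For x̃ in the convex hull of X define r̃(x̃) = sup{ Σ_{k=1}^{d+1} α_k·r(x_k) : x_1,…,x_{d+1} ∈ X, α_1,…,α_{d+1} ≥ 0, Σ_{k=1}^{d+1} α_k = 1, Σ_{k=1}^{d+1} α_k·x_k = x̃ }. Then r̃ is concave on the convex hull of X: for all x̃, ỹ in the convex hull of X and all λ ∈ [0,1], r̃(λ·x̃ + (1−λ)·ỹ) ≥ λ·r̃(x̃) + (1−λ)·r̃(ỹ). -/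

import Mathlib

open Finset

private lemma pad_sum {G : Type*} [AddCommMonoid G] {n m : ℕ} (h : n ≤ m) (F : Fin n → G) :
    (∑ k : Fin m, if h' : (k : ℕ) < n then F ⟨k, h'⟩ else 0) = ∑ k : Fin n, F k := by
  have h1 : (∑ k : Fin m, if h' : (k : ℕ) < n then F ⟨k, h'⟩ else 0)
      = ∑ i ∈ Finset.range m, (if h' : i < n then F ⟨i, h'⟩ else 0) :=
    Fin.sum_univ_eq_sum_range (fun i => if h' : i < n then F ⟨i, h'⟩ else 0) m
  have h2 : (∑ k : Fin n, F k)
      = ∑ i ∈ Finset.range n, (if h' : i < n then F ⟨i, h'⟩ else 0) := by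
    have := Fin.sum_univ_eq_sum_range (fun i => if h' : i < n then F ⟨i, h'⟩ else 0) n
    rw [← this]
    exact Finset.sum_congr rfl fun k _ => by simp
  rw [h1, h2]
  exact (Finset.sum_subset (Finset.range_mono h)
    (fun x _ hx => dif_neg (by simpa using hx))).symm

private lemma sum_equivFin {G : Type*} [AddCommMonoid G] {ι : Type*} (s : Finset ι) (f : ι → G) :
    ∑ k : Fin s.card, f (s.equivFin.symm k) = ∑ i ∈ s, f i := by
  rw [← Finset.sum_coe_sort s f]
  exact Equiv.sum_comp s.equivFin.symm (fun i => f (i : ι))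

private lemma reduce {d : ℕ} {X : Set (Fin d → ℝ)} (hXne : X.Nonempty)
    (r : (Fin d → ℝ) → ℝ) {ι : Type} (p : ι → Fin d → ℝ) :
    ∀ s : Finset ι, ∀ a : ι → ℝ,
      (∀ i ∈ s, p i ∈ X) → (∀ i ∈ s, 0 ≤ a i) → (∑ i ∈ s, a i) = 1 →
      ∃ (q : Fin (d + 1) → Fin d → ℝ) (b : Fin (d + 1) → ℝ),
        (∀ k, q k ∈ X) ∧ (∀ k, 0 ≤ b k) ∧ (∑ k, b k) = 1 ∧
        (∑ k, b k • q k) = (∑ i ∈ s, a i • p i) ∧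
        (∑ i ∈ s, a i * r (p i)) ≤ ∑ k, b k * r (q k) := by
  classical
  intro s
  induction s using Finset.strongInduction with
  | _ s ih =>
  intro a hp ha hsum
  by_cases hcard : s.card ≤ d + 1
  · -- base case: pad with a point of X with weight 0
    obtain ⟨x₀, hx₀⟩ := hXne
    set e := s.equivFin with he
    refine ⟨fun k => if h' : (k : ℕ) < s.card then p (e.symm ⟨k, h'⟩) else x₀,
      fun k => if h' : (k : ℕ) < s.card then a (e.symm ⟨k, h'⟩) else 0, ?_, ?_, ?_, ?_, ?_⟩
    · intro k
      by_cases h' : (k : ℕ) < s.card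
      · simpa [h'] using hp _ (e.symm ⟨k, h'⟩).2
      · simpa [h'] using hx₀
    · intro k
      by_cases h' : (k : ℕ) < s.card
      · simpa [h'] using ha _ (e.symm ⟨k, h'⟩).2
      · simp [h']
    · rw [pad_sum hcard (fun k => a (e.symm k)), sum_equivFin s a, hsum]
    · have : ∀ k : Fin (d + 1),
          (if h' : (k : ℕ) < s.card then a (e.symm ⟨k, h'⟩) else 0) •
            (if h' : (k : ℕ) < s.card then p (e.symm ⟨k, h'⟩) else x₀)
          = if h' : (k : ℕ) < s.card then a (e.symm ⟨k, h'⟩) • p (e.symm ⟨k, h'⟩) else 0 :=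
        fun k => by by_cases h' : (k : ℕ) < s.card <;> simp [h']
      rw [Finset.sum_congr rfl fun k _ => this k,
        pad_sum hcard (fun k => a (e.symm k) • p (e.symm k)),
        sum_equivFin s (fun i => a i • p i)]
    · have : ∀ k : Fin (d + 1),
          (if h' : (k : ℕ) < s.card then a (e.symm ⟨k, h'⟩) else 0) *
            r (if h' : (k : ℕ) < s.card then p (e.symm ⟨k, h'⟩) else x₀)
          = if h' : (k : ℕ) < s.card then a (e.symm ⟨k, h'⟩) * r (p (e.symm ⟨k, h'⟩)) else 0 :=
        fun k => by by_cases h' : (k : ℕ) < s.card <;> simp [h']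
      rw [Finset.sum_congr rfl fun k _ => this k,
        pad_sum hcard (fun k => a (e.symm k) * r (p (e.symm k))),
        sum_equivFin s (fun i => a i * r (p i))]
  · -- inductive step: more than d+1 points
    push_neg at hcard
    by_cases hinj : Set.InjOn p s
    · -- points are distinct: find an affine dependence and slide weights
      set L : (Fin d → ℝ) → (Fin (d + 1) → ℝ) := fun x => Fin.cons 1 x with hL
      have hLinj : Function.Injective L := by
        intro x y hxy
        have := congrArg Fin.tail hxy
        simpa [hL, Fin.tail_cons] using this
      have hinj2 : ∀ x ∈ s, ∀ y ∈ s, L (p x) = L (p y) → x = y :=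
        fun x hx y hy hxy => hinj hx hy (hLinj hxy)
      set t : Finset (Fin (d + 1) → ℝ) := s.image (fun i => L (p i)) with ht
      have hcardt : Module.finrank ℝ (Fin (d + 1) → ℝ) < t.card := by
        rw [ht, Finset.card_image_of_injOn hinj2, Module.finrank_pi]
        simpa using hcard
      obtain ⟨f, hf0, x, hxt, hxne⟩ :=
        Module.exists_nontrivial_relation_of_finrank_lt_card hcardt
      rw [ht, Finset.sum_image hinj2] at hf0
      -- extract a signed relation with nonpositive value
      obtain ⟨c, hc1, hcp, hcx, hcr⟩ : ∃ c : ι → ℝ, (∑ i ∈ s, c i) = 0 ∧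
          (∑ i ∈ s, c i • p i) = 0 ∧ (∃ i ∈ s, c i ≠ 0) ∧
          (∑ i ∈ s, c i * r (p i)) ≤ 0 := by
        have hc1' : (∑ i ∈ s, f (L (p i))) = 0 := by
          have := congrFun hf0 0
          simpa [hL, Finset.sum_apply, Fin.cons_zero] using this
        have hcp' : (∑ i ∈ s, f (L (p i)) • p i) = 0 := by
          funext jj
          have := congrFun hf0 jj.succ
          simpa [hL, Finset.sum_apply, Fin.cons_succ] using this
        have hcx' : ∃ i ∈ s, f (L (p i)) ≠ 0 := by
          rw [ht] at hxt
          obtain ⟨i1, hi1, hi1x⟩ := Finset.mem_image.1 hxt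
          exact ⟨i1, hi1, by rw [hi1x]; exact hxne⟩
        rcases le_or_gt (∑ i ∈ s, f (L (p i)) * r (p i)) 0 with hle | hlt
        · exact ⟨fun i => f (L (p i)), hc1', hcp', hcx', hle⟩
        · refine ⟨fun i => -f (L (p i)), by simp [hc1'], ?_, ?_, ?_⟩
          · simp only [neg_smul, Finset.sum_neg_distrib, hcp', neg_zero]
          · obtain ⟨i1, hi1, hne⟩ := hcx'
            exact ⟨i1, hi1, by simpa using hne⟩
          · simp only [neg_mul, Finset.sum_neg_distrib]
            linarith
      -- there is a positive coefficient
      have hpos : ∃ i ∈ s, 0 < c i := by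
        by_contra hcon
        push_neg at hcon
        obtain ⟨i1, hi1, hne⟩ := hcx
        exact hne ((Finset.sum_eq_zero_iff_of_nonpos hcon).1 hc1 i1 hi1)
      obtain ⟨i1, hi1, hi1pos⟩ := hpos
      set P := s.filter (fun i => 0 < c i) with hP
      have hPne : P.Nonempty := ⟨i1, Finset.mem_filter.2 ⟨hi1, hi1pos⟩⟩
      obtain ⟨i₀, hi₀P, hi₀min⟩ := P.exists_min_image (fun i => a i / c i) hPne
      have hi₀s : i₀ ∈ s := (Finset.mem_filter.1 hi₀P).1
      have hci₀ : 0 < c i₀ := (Finset.mem_filter.1 hi₀P).2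
      set t₀ := a i₀ / c i₀ with ht₀
      have ht₀0 : 0 ≤ t₀ := div_nonneg (ha _ hi₀s) hci₀.le
      set a' : ι → ℝ := fun i => a i - t₀ * c i with ha'
      have has : ∀ k ∈ s, 0 ≤ a' k := by
        intro k hk
        by_cases hck : 0 < c k
        · have hmin := hi₀min k (Finset.mem_filter.2 ⟨hk, hck⟩)
          have h2 : t₀ * c k ≤ a k := (le_div_iff₀ hck).1 hmin
          show 0 ≤ a k - t₀ * c k
          linarith
        · push_neg at hck
          have h1 : t₀ * c k ≤ 0 := mul_nonpos_of_nonneg_of_nonpos ht₀0 hck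
          have h2 := ha _ hk
          show 0 ≤ a k - t₀ * c k
          linarith
      have ha'i₀ : a' i₀ = 0 := by
        show a i₀ - t₀ * c i₀ = 0
        rw [ht₀, div_mul_cancel₀ _ hci₀.ne', sub_self]
      -- sums with the new weights
      have hsa' : ∑ i ∈ s, a' i = 1 := by
        show ∑ i ∈ s, (a i - t₀ * c i) = 1
        rw [Finset.sum_sub_distrib, ← Finset.mul_sum, hc1, hsum]
        ring
      have hpa' : ∑ i ∈ s, a' i • p i = ∑ i ∈ s, a i • p i := by
        have h1 : ∀ i, a' i • p i = a i • p i - t₀ • (c i • p i) := by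
          intro i
          show (a i - t₀ * c i) • p i = _
          rw [sub_smul, smul_smul]
        rw [Finset.sum_congr rfl fun i _ => h1 i, Finset.sum_sub_distrib,
          ← Finset.smul_sum, hcp, smul_zero, sub_zero]
      have hra' : ∑ i ∈ s, a i * r (p i) ≤ ∑ i ∈ s, a' i * r (p i) := by
        have h1 : ∀ i, a' i * r (p i) = a i * r (p i) - t₀ * (c i * r (p i)) := by
          intro i
          show (a i - t₀ * c i) * r (p i) = _
          ring
        rw [Finset.sum_congr rfl fun i _ => h1 i, Finset.sum_sub_distrib, ← Finset.mul_sum]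
        nlinarith [mul_nonneg ht₀0 (neg_nonneg.2 hcr)]
      -- drop i₀
      have hss : s.erase i₀ ⊂ s := Finset.erase_ssubset hi₀s
      have hps : ∀ k ∈ s.erase i₀, p k ∈ X := fun k hk => hp k (Finset.mem_of_mem_erase hk)
      have has' : ∀ k ∈ s.erase i₀, 0 ≤ a' k := fun k hk => has k (Finset.mem_of_mem_erase hk)
      have he1 : ∑ i ∈ s.erase i₀, a' i = 1 := by
        rw [← hsa', ← Finset.add_sum_erase _ a' hi₀s, ha'i₀, zero_add]
      have he2 : ∑ i ∈ s.erase i₀, a' i • p i = ∑ i ∈ s, a' i • p i := by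
        rw [← Finset.add_sum_erase _ (fun i => a' i • p i) hi₀s, ha'i₀, zero_smul, zero_add]
      have he3 : ∑ i ∈ s.erase i₀, a' i * r (p i) = ∑ i ∈ s, a' i * r (p i) := by
        rw [← Finset.add_sum_erase _ (fun i => a' i * r (p i)) hi₀s, ha'i₀, zero_mul, zero_add]
      obtain ⟨q, b, hq1, hb1, hb2, hb3, hb4⟩ := ih (s.erase i₀) hss a' hps has' he1
      refine ⟨q, b, hq1, hb1, hb2, ?_, ?_⟩
      · rw [hb3, he2, hpa']
      · calc ∑ i ∈ s, a i * r (p i) ≤ ∑ i ∈ s, a' i * r (p i) := hra'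
          _ = ∑ i ∈ s.erase i₀, a' i * r (p i) := he3.symm
          _ ≤ ∑ k, b k * r (q k) := hb4
    · -- two equal points: merge them
      rw [Set.InjOn] at hinj
      push_neg at hinj
      obtain ⟨i, hi, j, hj, hpij, hij⟩ := hinj
      simp only [Finset.mem_coe] at hi hj
      set a' : ι → ℝ := Function.update a i (a i + a j) with ha'
      have hkey : ∀ {G : Type} [AddCommGroup G] [Module ℝ G] (g : ι → G), g i = g j →
          ∑ k ∈ s.erase j, a' k • g k = ∑ k ∈ s, a k • g k := by
        intro G _ _ g hg
        have hi' : i ∈ s.erase j := Finset.mem_erase.2 ⟨hij, hi⟩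
        rw [← Finset.add_sum_erase _ _ hi', ← Finset.add_sum_erase _ (fun k => a k • g k) hj,
          ← Finset.add_sum_erase _ (fun k => a k • g k) hi']
        have h1 : ∀ k ∈ (s.erase j).erase i, a' k • g k = a k • g k := by
          intro k hk
          rw [ha', Function.update_of_ne (Finset.mem_erase.1 hk).1]
        rw [Finset.sum_congr rfl h1]
        have : a' i • g i = a j • g j + a i • g i := by
          rw [ha', Function.update_self, add_smul, hg, add_comm]
        rw [this, add_assoc]
      have hss : s.erase j ⊂ s := Finset.erase_ssubset hj
      have hps : ∀ k ∈ s.erase j, p k ∈ X := fun k hk => hp k (Finset.mem_of_mem_erase hk)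
      have has : ∀ k ∈ s.erase j, 0 ≤ a' k := by
        intro k hk
        by_cases hki : k = i
        · subst hki
          rw [ha', Function.update_self]
          exact add_nonneg (ha _ hi) (ha _ hj)
        · rw [ha', Function.update_of_ne hki]
          exact ha _ (Finset.mem_of_mem_erase hk)
      have hsum' : ∑ k ∈ s.erase j, a' k = 1 := by
        have := hkey (fun _ => (1 : ℝ)) rfl
        simpa [hsum] using this
      obtain ⟨q, b, hq1, hb1, hb2, hb3, hb4⟩ := ih (s.erase j) hss a' hps has hsum'
      refine ⟨q, b, hq1, hb1, hb2, ?_, ?_⟩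
      · rw [hb3, hkey p hpij]
      · have hv := hkey (G := ℝ) (fun k => r (p k)) (by show r (p i) = r (p j); rw [hpij])
        simp only [smul_eq_mul] at hv
        rw [← hv]
        exact hb4

/-- Concavity of the (d+1)-point concavification. -/
theorem stmt13
    (d : ℕ) (X : Set (Fin d → ℝ)) (hXne : X.Nonempty)
    (r : (Fin d → ℝ) → ℝ)
    (M : ℝ) (hM : ∀ x ∈ X, r x ≤ M)
    (rt : (Fin d → ℝ) → ℝ)
    (hrt : ∀ z ∈ convexHull ℝ X, rt z =
      sSup { v | ∃ (p : Fin (d + 1) → Fin d → ℝ) (a : Fin (d + 1) → ℝ),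
        (∀ k, p k ∈ X) ∧ (∀ k, 0 ≤ a k) ∧ (∑ k, a k) = 1 ∧
        (∑ k, a k • p k) = z ∧ v = ∑ k, a k * r (p k) }) :
    ∀ xt ∈ convexHull ℝ X, ∀ yt ∈ convexHull ℝ X, ∀ l ∈ Set.Icc (0 : ℝ) 1,
      l * rt xt + (1 - l) * rt yt ≤ rt (l • xt + (1 - l) • yt) := by
  classical
  set S : (Fin d → ℝ) → Set ℝ := fun z =>
    { v | ∃ (p : Fin (d + 1) → Fin d → ℝ) (a : Fin (d + 1) → ℝ),
        (∀ k, p k ∈ X) ∧ (∀ k, 0 ≤ a k) ∧ (∑ k, a k) = 1 ∧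
        (∑ k, a k • p k) = z ∧ v = ∑ k, a k * r (p k) } with hS
  have hbdd : ∀ z : Fin d → ℝ, BddAbove (S z) := by
    intro z
    refine ⟨M, fun v hv => ?_⟩
    obtain ⟨p, a, hpX, ha0, ha1, -, hval⟩ := hv
    rw [hval]
    calc ∑ k, a k * r (p k) ≤ ∑ k, a k * M :=
          Finset.sum_le_sum fun k _ => mul_le_mul_of_nonneg_left (hM _ (hpX k)) (ha0 k)
      _ = M := by rw [← Finset.sum_mul, ha1, one_mul]
  have hnonempty : ∀ z ∈ convexHull ℝ X, (S z).Nonempty := by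
    intro z hz
    rw [_root_.convexHull_eq] at hz
    obtain ⟨ι, t, w, zf, h0, h1, hmem, hcm⟩ := hz
    obtain ⟨q, b, hq1, hb1, hb2, hb3, -⟩ := reduce hXne r zf t w hmem h0 h1
    refine ⟨∑ k, b k * r (q k), q, b, hq1, hb1, hb2, ?_, rfl⟩
    rw [hb3, ← Finset.centerMass_eq_of_sum_1 _ _ h1, hcm]
  intro xt hxt yt hyt l hl
  obtain ⟨hl0, hl1⟩ := hl
  have hz : l • xt + (1 - l) • yt ∈ convexHull ℝ X :=
    (convex_convexHull ℝ X) hxt hyt hl0 (by linarith) (by ring)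
  rw [hrt xt hxt, hrt yt hyt, hrt _ hz]
  -- key combination step
  have hcomb : ∀ u ∈ S xt, ∀ v ∈ S yt, l * u + (1 - l) * v ≤ sSup (S (l • xt + (1 - l) • yt)) := by
    intro u hu v hv
    obtain ⟨px, ax, hpx, hax0, hax1, hax2, hax3⟩ := hu
    obtain ⟨py, ay, hpy, hay0, hay1, hay2, hay3⟩ := hv
    set p : Fin (d + 1) ⊕ Fin (d + 1) → Fin d → ℝ := Sum.elim px py with hp
    set a : Fin (d + 1) ⊕ Fin (d + 1) → ℝ :=
      Sum.elim (fun k => l * ax k) (fun k => (1 - l) * ay k) with ha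
    have hpX : ∀ i ∈ (Finset.univ : Finset (Fin (d + 1) ⊕ Fin (d + 1))), p i ∈ X := by
      rintro (k | k) - <;> [exact hpx k; exact hpy k]
    have ha0 : ∀ i ∈ (Finset.univ : Finset (Fin (d + 1) ⊕ Fin (d + 1))), 0 ≤ a i := by
      rintro (k | k) -
      · exact mul_nonneg hl0 (hax0 k)
      · exact mul_nonneg (by linarith) (hay0 k)
    have ha1 : ∑ i, a i = 1 := by
      rw [Fintype.sum_sum_type]
      simp only [ha, Sum.elim_inl, Sum.elim_inr, ← Finset.mul_sum, hax1, hay1]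
      ring
    obtain ⟨q, b, hq1, hb1, hb2, hb3, hb4⟩ := reduce hXne r p Finset.univ a hpX ha0 ha1
    have hsum : ∑ i, a i • p i = l • xt + (1 - l) • yt := by
      rw [Fintype.sum_sum_type]
      simp only [ha, hp, Sum.elim_inl, Sum.elim_inr, mul_smul]
      rw [← Finset.smul_sum, ← Finset.smul_sum, hax2, hay2]
    have hval : ∑ i, a i * r (p i) = l * u + (1 - l) * v := by
      rw [Fintype.sum_sum_type]
      simp only [ha, hp, Sum.elim_inl, Sum.elim_inr, mul_assoc]
      rw [← Finset.mul_sum, ← Finset.mul_sum, ← hax3, ← hay3]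
    have hmem : (∑ k, b k * r (q k)) ∈ S (l • xt + (1 - l) • yt) :=
      ⟨q, b, hq1, hb1, hb2, by rw [hb3, hsum], rfl⟩
    calc l * u + (1 - l) * v = ∑ i, a i * r (p i) := hval.symm
      _ ≤ ∑ k, b k * r (q k) := hb4
      _ ≤ sSup (S (l • xt + (1 - l) • yt)) := le_csSup (hbdd _) hmem
  refine le_of_forall_pos_le_add fun ε hε => ?_
  obtain ⟨u, hu, hu2⟩ := exists_lt_of_lt_csSup (hnonempty xt hxt)
    (show sSup (S xt) - ε / 2 < sSup (S xt) by linarith)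
  obtain ⟨v, hv, hv2⟩ := exists_lt_of_lt_csSup (hnonempty yt hyt)
    (show sSup (S yt) - ε / 2 < sSup (S yt) by linarith)
  have h1 : l * sSup (S xt) ≤ l * (u + ε / 2) :=
    mul_le_mul_of_nonneg_left (by linarith) hl0
  have h2 : (1 - l) * sSup (S yt) ≤ (1 - l) * (v + ε / 2) :=
    mul_le_mul_of_nonneg_left (by linarith) (by linarith)
  have h3 := hcomb u hu v hv
  nlinarith [h3]
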